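/- Visitable paths of a sum: for a nonempty family (A_k)_{k∈K} of pairwise disjoint positive behaviours, the visitable paths of ⊕_{k∈K} A_k are exactly the disjoint union of the visitable paths of the A_k; i.e. V_{⊕_k A_k} = ⨄_k V_{A_k}. -/

import Mathlib

namespace Ludics

abbrev Address := List ℕ

/-- An action of Ludics: the daimon, or a proper action given by a polarity
(`true` = positive), a focus address and a ramification. -/
inductive Action where
  | daimon : Action
  | proper (pos : Bool) (focus : Address) (ram : Finset ℕ) : Action
deriving DecidableEq

namespace Action

def isPositive : Action → Bool
  | daimon => true
  | proper pos _ _ => pos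

def focus? : Action → Option Address
  | daimon => none
  | proper _ ξ _ => some ξ

/-- Reverse the polarity of an action. -/
def dual : Action → Action
  | daimon => daimon
  | proper pos ξ I => proper (!pos) ξ I

/-- `a.justifiesB b` : the focus of `b` is one of the addresses created by `a`. -/
def justifiesB : Action → Action → Bool
  | proper _ ξ I, proper _ ζ _ => decide (∃ i ∈ I, ζ = ξ ++ [i])
  | _, _ => false

def justifies (a b : Action) : Prop := a.justifiesB b = true

end Action

/-- A sequent of a base: an optional left address (at most one) and a finite
set of right addresses. -/
structure Sequent where
  left : Option Address
  right : Finset Address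

abbrev Base := List Sequent

def Base.isPositive (β : Base) : Prop := ∃ σ ∈ β, σ.left = none

/-- An action is initial w.r.t. a base if its focus belongs to the base
(on the side corresponding to its polarity). -/
def Initial (β : Base) (a : Action) : Prop :=
  ∃ pol ξ I, a = .proper pol ξ I ∧
    ∃ σ ∈ β, (pol = true ∧ ξ ∈ σ.right) ∨ (pol = false ∧ σ.left = some ξ)

/-- A sequent "owns" an action when its focus is hereditarily justified by an
address of the sequent (i.e. extends an address of the sequent). -/
def Sequent.owns (σ : Sequent) (a : Action) : Prop :=
  ∃ ξ, a.focus? = some ξ ∧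
    ((∃ γ, σ.left = some γ ∧ γ <+: ξ) ∨ (∃ δ ∈ σ.right, δ <+: ξ))

def Sequent.addresses (σ : Sequent) : Set Address :=
  (match σ.left with | some γ => {γ} | none => ∅) ∪ ↑σ.right

def Base.addresses (β : Base) : Set Address :=
  {a | ∃ σ ∈ β, a ∈ σ.addresses}

/-- The dual base: each sequent `Γ ⊢ Δ` gives sequents `⊢ Γ` and `δ ⊢` for δ ∈ Δ. -/
noncomputable def Sequent.dualSequents (σ : Sequent) : List Sequent :=
  (match σ.left with
    | some γ => [⟨none, ({γ} : Finset Address)⟩]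
    | none => []) ++
    σ.right.toList.map fun δ => ⟨some δ, (∅ : Finset Address)⟩

noncomputable def Base.dual (β : Base) : Base := (β.map Sequent.dualSequents).flatten

/-- View of a sequence, computed on the reversed sequence (most recent action
first), with fuel. -/
def viewRevAux : ℕ → List Action → List Action
  | 0, _ => []
  | _ + 1, [] => []
  | n + 1, a :: w =>
    if a.isPositive then a :: viewRevAux n w
    else a :: viewRevAux n (w.dropWhile fun b => !(b.justifiesB a))

def viewRev (s : List Action) : List Action := viewRevAux s.length s

/-- The view `⌜s⌝` of a sequence of actions. -/
def view (s : List Action) : List Action := (viewRev s.reverse).reverse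

/-- `p` is a path based on `β`. -/
structure IsPath (β : Base) (p : List Action) : Prop where
  alternating : p.Chain' fun a b => a.isPositive ≠ b.isPositive
  justified : ∀ w a, w ++ [a] <+: p → a ≠ Action.daimon →
    Initial β a ∨ ∃ b ∈ w, b.justifies a
  negJump : ∀ w a b, w ++ [a] <+: p → a.isPositive = true → b ∈ w →
    b.justifies a → b ∈ view w
  posJump : ∀ w a, w ++ [a] <+: p → a.isPositive = true → a ≠ Action.daimon →
    ∀ σ ∈ β, (∃ f, a.focus? = some f ∧ f ∈ σ.right) →
      (w = [] ∧ σ.left = none) ∨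
      ∃ w' b, w = w' ++ [b] ∧ b.isPositive = false ∧ σ.owns b
  linearity : (p.filterMap Action.focus?).Nodup
  daimonLast : ∀ w, w ++ [Action.daimon] <+: p → w ++ [Action.daimon] = p
  daimonFirst : p.head? = some Action.daimon → β.isPositive
  totality : β.isPositive → ∃ a t, p = a :: t ∧
    (a = Action.daimon ∨ (a.isPositive = true ∧ Initial β a))

/-- A chronicle: a non-empty path where each non-initial negative action is
justified by the immediately preceding action. -/
def IsChronicle (β : Base) (c : List Action) : Prop :=
  IsPath β c ∧ c ≠ [] ∧
    ∀ w a b, w ++ [a, b] <+: c → b.isPositive = false →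
      Initial β b ∨ a.justifies b

/-- The dual of a positive-ended sequence: reverse all polarities, removing a
final daimon if present and appending one otherwise. -/
def dualSeq (p : List Action) : List Action :=
  if p.getLast? = some Action.daimon then p.dropLast.map Action.dual
  else p.map Action.dual ++ [Action.daimon]

/-- Positive-ended (possibly empty) sequence. -/
def PosEnded (p : List Action) : Prop :=
  p = [] ∨ ∃ a, p.getLast? = some a ∧ a.isPositive = true

/-- A (non-empty) negative-starting, positive-ended block. -/
def NegBlock (b : List Action) : Prop :=
  b ≠ [] ∧ (∀ a, b.head? = some a → a.isPositive = false) ∧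
    ∀ a, b.getLast? = some a → a.isPositive = true

def EndsWithDaimon (p : List Action) : Prop := p.getLast? = some Action.daimon

/-- Basic shuffle of two positive-ended negative paths: interleaving by
positive-ended negative blocks; if the last `p`-block ends with the daimon
then the last `q`-block is empty. -/
def ShuffleNeg (p q r : List Action) : Prop :=
  ∃ ps qs : List (List Action),
    ps.length = qs.length ∧
    (∀ b ∈ ps, b = [] ∨ NegBlock b) ∧
    (∀ b ∈ qs, b = [] ∨ NegBlock b) ∧
    ps.flatten = p ∧ qs.flatten = q ∧
    (List.zipWith (· ++ ·) ps qs).flatten = r ∧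
    (EndsWithDaimon (ps.getLast?.getD []) → qs.getLast?.getD [] = [])

/-- The shuffle `r ∈ p ⧢ q`, including the extensions to two daimon-ended
paths and to paths with a common positive-ended prefix. -/
inductive Shuffle : List Action → List Action → List Action → Prop where
  | base {p q r} : ShuffleNeg p q r → Shuffle p q r
  | daiLeft {p q r} {κ₁ κ₂ : Action} :
      Shuffle (p ++ [κ₁, Action.daimon]) q r →
      Shuffle (p ++ [κ₁, Action.daimon]) (q ++ [κ₂, Action.daimon]) r
  | daiRight {p q r} {κ₁ κ₂ : Action} :
      Shuffle p (q ++ [κ₂, Action.daimon]) r →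
      Shuffle (p ++ [κ₁, Action.daimon]) (q ++ [κ₂, Action.daimon]) r
  | pre {s p q r} : s ≠ [] → PosEnded s → Shuffle p q r →
      Shuffle (s ++ p) (s ++ q) (s ++ r)

/-- Shuffle closure of a set of (positive-ended) paths. -/
inductive ShuffleClosure (P : Set (List Action)) : List Action → Prop where
  | mem {p} : p ∈ P → ShuffleClosure P p
  | shuffle {p q r} : ShuffleClosure P p → ShuffleClosure P q →
      Shuffle p q r → ShuffleClosure P r

/-- Coherence of chronicles: comparability and propagation. -/
def Coherent (c₁ c₂ : List Action) : Prop :=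
  (∀ w κ₁ κ₂, w ++ [κ₁] <+: c₁ → w ++ [κ₂] <+: c₂ →
      κ₁ = κ₂ ∨ (κ₁.isPositive = false ∧ κ₂.isPositive = false)) ∧
  (∀ w ξ₁ I₁ w₁ σ₁ ξ₂ I₂ w₂ σ₂,
      w ++ Action.proper false ξ₁ I₁ :: w₁ ++ [σ₁] <+: c₁ →
      w ++ Action.proper false ξ₂ I₂ :: w₂ ++ [σ₂] <+: c₂ →
      ξ₁ ≠ ξ₂ → ∀ f, σ₁.focus? = some f → σ₂.focus? ≠ some f)

/-- A design, as a prefix-closed clique of chronicles. -/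
structure IsDesign (β : Base) (D : Set (List Action)) : Prop where
  chron : ∀ c ∈ D, IsChronicle β c
  prefixClosed : ∀ c ∈ D, ∀ d, d <+: c → d ≠ [] → d ∈ D
  coherent : ∀ c ∈ D, ∀ d ∈ D, Coherent c d
  maxPos : ∀ c ∈ D, (∀ κ, c ++ [κ] ∉ D) →
    ∃ a, c.getLast? = some a ∧ a.isPositive = true
  posNonempty : β.isPositive → D.Nonempty

/-- A net of designs, abusively seen as its set of chronicles. -/
structure IsNet (β : Base) (R : Set (List Action)) : Prop where
  chron : ∀ c ∈ R, IsChronicle β c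
  prefixClosed : ∀ c ∈ R, ∀ d, d <+: c → d ≠ [] → d ∈ R

/-- `p` is a path of the design/net `D`: each view of each non-empty prefix of
`p` is a chronicle of `D`. -/
def PathOf (β : Base) (D : Set (List Action)) (p : List Action) : Prop :=
  IsPath β p ∧ ∀ q, q <+: p → q ≠ [] → view q ∈ D

/-- Whose turn it is in normalization: `dpos` says whether the design `D` owns
the first (positive) move; afterwards `D` moves exactly after negative actions. -/
def TurnD (dpos : Prop) (s : List Action) : Prop :=
  match s.getLast? with
  | none => dpos
  | some a => a.isPositive = false

/-- Interaction (normalization) between a design `D` and a counter-net `R`,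
described by its visited sequence `s` (seen from `D`): it converges from
state `s` if the design to move plays the daimon, or it plays a proper
positive action accepted (in dual form) by the other one, and the interaction
converges from the extended state. -/
inductive Conv (D R : Set (List Action)) (dpos : Prop) : List Action → Prop where
  | daiD {s} : TurnD dpos s → view (s ++ [Action.daimon]) ∈ D → Conv D R dpos s
  | daiR {s} : ¬ TurnD dpos s →
      view (s.map Action.dual ++ [Action.daimon]) ∈ R → Conv D R dpos s
  | stepD {s κ} : TurnD dpos s → κ.isPositive = true → κ ≠ Action.daimon →
      view (s ++ [κ]) ∈ D → view ((s ++ [κ]).map Action.dual) ∈ R →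
      Conv D R dpos (s ++ [κ]) → Conv D R dpos s
  | stepR {s κ} : ¬ TurnD dpos s → κ.isPositive = false →
      view ((s ++ [κ]).map Action.dual) ∈ R → view (s ++ [κ]) ∈ D →
      Conv D R dpos (s ++ [κ]) → Conv D R dpos s

/-- The simple base `⊢ ξ` (positive) or `ξ ⊢` (negative). -/
def simpleBase (ξ : Address) (pos : Bool) : Base :=
  if pos then [⟨none, {ξ}⟩] else [⟨some ξ, ∅⟩]

/-- The orthogonal of a set of designs on a simple base. -/
def orthSet (ξ : Address) (pos : Bool) (A : Set (Set (List Action))) :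
    Set (Set (List Action)) :=
  {E | IsDesign (simpleBase ξ !pos) E ∧
    ∀ D ∈ A, if pos then Conv D E True [] else Conv E D True []}

def biorth (ξ : Address) (pos : Bool) (A : Set (Set (List Action))) :
    Set (Set (List Action)) :=
  orthSet ξ (!pos) (orthSet ξ pos A)

/-- A behaviour: a bi-orthogonally closed set of designs on a simple base. -/
structure Behaviour (ξ : Address) (pos : Bool) where
  designs : Set (Set (List Action))
  isDesign : ∀ D ∈ designs, IsDesign (simpleBase ξ pos) D
  closed : designs = biorth ξ pos designs

/-- Visitable paths of a set of designs: traces of convergent normalizations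
with the orthogonal, characterized as the dual pairs of paths. -/
def VisitableSet (ξ : Address) (pos : Bool) (S : Set (Set (List Action)))
    (p : List Action) : Prop :=
  ∃ D ∈ S, ∃ E ∈ orthSet ξ pos S,
    PathOf (simpleBase ξ pos) D p ∧ PathOf (simpleBase ξ !pos) E (dualSeq p)

def Visitable {ξ : Address} {pos : Bool} (A : Behaviour ξ pos)
    (p : List Action) : Prop :=
  VisitableSet ξ pos A.designs p

/-- Material (incarnated) design of a behaviour: inclusion-minimal. -/
def Material {ξ : Address} {pos : Bool} (A : Behaviour ξ pos)
    (D : Set (List Action)) : Prop :=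
  D ∈ A.designs ∧ ∀ E ∈ A.designs, E ⊆ D → E = D

/-- Completion of a design: add daimon-ended chronicles after every missing
negative action. -/
def completion (β : Base) (D : Set (List Action)) : Set (List Action) :=
  D ∪ {c' | ∃ c ∈ D, ∃ ξ I,
    (c' = c ++ [Action.proper false ξ I] ∨
      c' = c ++ [Action.proper false ξ I, Action.daimon]) ∧
    IsChronicle β (c ++ [Action.proper false ξ I, Action.daimon]) ∧
    c ++ [Action.proper false ξ I] ∉ D}

def DaiDesign : Set (List Action) := {[Action.daimon]}

def firstAction (D : Set (List Action)) (κ : Action) : Prop :=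
  ∃ c ∈ D, c.head? = some κ

/-- Directory of a set of positive designs on `⊢ ξ`. -/
def directory (ξ : Address) (A : Set (Set (List Action))) : Set (Finset ℕ) :=
  {I | ∃ D ∈ A, firstAction D (Action.proper true ξ I)}

/-- Alien positive behaviours: ramifications of first actions pairwise disjoint. -/
def Alien (ξ : Address) (A B : Behaviour ξ true) : Prop :=
  ∀ I ∈ directory ξ A.designs, ∀ J ∈ directory ξ B.designs, Disjoint I J

/-- Extension of the first action of a design by a set `J`. -/
def extDesign (ξ : Address) (J : Finset ℕ) (D : Set (List Action)) :
    Set (List Action) :=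
  {c | ∃ I t, (Action.proper true ξ I :: t) ∈ D ∧
      c = Action.proper true ξ (I ∪ J) :: t}

/-- The extension `A_[B]` of a set of designs along another. -/
def extended (ξ : Address) (A B : Set (Set (List Action))) :
    Set (Set (List Action)) :=
  insert DaiDesign
    {D' | ∃ D ∈ A, (∃ I, firstAction D (Action.proper true ξ I)) ∧
      ∃ E ∈ B, ∃ J, firstAction E (Action.proper true ξ J) ∧
        D' = extDesign ξ J D}

/-- The extension `P_[Q]` of a set of paths along another. -/
def extPaths (ξ : Address) (P Q : Set (List Action)) : Set (List Action) :=
  insert [Action.daimon]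
    {p | ∃ I t, (Action.proper true ξ I :: t) ∈ P ∧
      ∃ q ∈ Q, ∃ J, q.head? = some (Action.proper true ξ J) ∧
        p = Action.proper true ξ (I ∪ J) :: t}

/-- Prefixing a (negative) design by the positive action `(+, ξ, {i})`. -/
def shiftD (ξ : Address) (i : ℕ) (D : Set (List Action)) : Set (List Action) :=
  insert [Action.proper true ξ {i}]
    {c | ∃ d ∈ D, c = Action.proper true ξ {i} :: d}

/-- `C = ↑N` : the positive shift of the negative behaviour `N`. -/
def IsShiftOf (ξ : Address) (i : ℕ) (C : Behaviour ξ true)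
    (N : Behaviour (ξ ++ [i]) false) : Prop :=
  C.designs = biorth ξ true (shiftD ξ i '' N.designs)

/-- `C = ⊕ₖ F k`. -/
def IsSumOf {ξ : Address} {ι : Type} (C : Behaviour ξ true)
    (F : ι → Behaviour ξ true) : Prop :=
  C.designs = biorth ξ true (⋃ k, (F k).designs)

/-- Pairwise disjoint family of positive behaviours (disjoint directories). -/
def PairwiseDisjointFam {ξ : Address} {ι : Type}
    (F : ι → Behaviour ξ true) : Prop :=
  ∀ k l, k ≠ l → ∀ I ∈ directory ξ (F k).designs,
    I ∉ directory ξ (F l).designs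

open Classical in
/-- Tensor of two positive designs on `⊢ ξ`. -/
noncomputable def tensorD (ξ : Address) (D E : Set (List Action)) :
    Set (List Action) :=
  if D = DaiDesign ∨ E = DaiDesign then DaiDesign
  else {c | ∃ I J, firstAction D (Action.proper true ξ I) ∧
      firstAction E (Action.proper true ξ J) ∧
      ∃ t, ((Action.proper true ξ I :: t) ∈ D ∨
            (Action.proper true ξ J :: t) ∈ E) ∧
        c = Action.proper true ξ (I ∪ J) :: t}

/-- `C = A ⊗ B`. -/
def IsTensorOf {ξ : Address} (C A B : Behaviour ξ true) : Prop :=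
  C.designs = biorth ξ true
    {G | ∃ D ∈ A.designs, ∃ E ∈ B.designs, G = tensorD ξ D E}

/-- Hereditary chains of justifiers inside a sequence `p`. -/
inductive JustChain (β : Base) (p : List Action) : List Action → Prop where
  | init {κ} : κ ∈ p → Initial β κ → JustChain β p [κ]
  | cons {s κ κ'} : JustChain β p (s ++ [κ]) → κ' ∈ p → κ.justifies κ' →
      JustChain β p (s ++ [κ, κ'])

/-- Trivial chronicle for a behaviour: hereditary-justifier sequence of an
action of a chronicle of a material design. -/
def TrivialChronicle {ξ : Address} {pos : Bool} (A : Behaviour ξ pos)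
    (s : List Action) : Prop :=
  ∃ D, Material A D ∧ ∃ c ∈ D, JustChain (simpleBase ξ pos) c s

/-- Regular path for a behaviour: reversible path whose justifier chains are
trivial chronicles for the behaviour. -/
def RegularPath {ξ : Address} {pos : Bool} (A : Behaviour ξ pos)
    (p : List Action) : Prop :=
  IsPath (simpleBase ξ pos) p ∧ IsPath (simpleBase ξ !pos) (dualSeq p) ∧
  ∀ κ ∈ p, κ ≠ Action.daimon →
    ∃ s, JustChain (simpleBase ξ pos) p s ∧ s.getLast? = some κ ∧
      TrivialChronicle A s

/-- Regular behaviour: every regular path is visitable. -/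
def Regular {ξ : Address} {pos : Bool} (A : Behaviour ξ pos) : Prop :=
  ∀ p, RegularPath A p → Visitable A p

/-- Proper actions occurring in a design. -/
def properActs (D : Set (List Action)) : Set Action :=
  {a | a ≠ Action.daimon ∧ ∃ c ∈ D, a ∈ c}

/-- Essentially finite behaviour: finitely many material designs, all finite. -/
def EssFinite {ξ : Address} {pos : Bool} (A : Behaviour ξ pos) : Prop :=
  {D | Material A D}.Finite ∧ ∀ D, Material A D → (properActs D).Finite

/-- A slice of a design. -/
def IsSlice (D S : Set (List Action)) : Prop :=
  S ⊆ D ∧ (∀ c ∈ S, ∀ d, d <+: c → d ≠ [] → d ∈ S) ∧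
  ∀ w ξ I₁ I₂, w ++ [Action.proper false ξ I₁] ∈ S →
    w ++ [Action.proper false ξ I₂] ∈ S → I₁ = I₂

/-- Uniformly bounded behaviour: slice sizes of material designs uniformly
bounded. -/
def UnifBounded {ξ : Address} {pos : Bool} (A : Behaviour ξ pos) : Prop :=
  ∃ N : ℕ, ∀ D, Material A D → ∀ S, IsSlice D S →
    (properActs S).Finite ∧ (properActs S).ncard < N

def oneDesign (ξ : Address) : Set (List Action) :=
  {[Action.proper true ξ ∅]}

mutual
  /-- The class `C∞⁺` of positive behaviours: `0`, `1`, or a (possibly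
  infinite) nonempty sum of finite tensors of shifts of `C∞⁻` elements. -/
  inductive CInf : (ξ : Address) → Behaviour ξ true → Prop where
    | zero {ξ} (A : Behaviour ξ true) :
        A.designs = {DaiDesign} → CInf ξ A
    | one {ξ} (A : Behaviour ξ true) :
        A.designs = biorth ξ true {oneDesign ξ} → CInf ξ A
    | sum {ξ} {ι : Type} (F : ι → Behaviour ξ true) (C : Behaviour ξ true) :
        Nonempty ι → (∀ k, CInfTS ξ (F k)) → PairwiseDisjointFam F →
        IsSumOf C F → CInf ξ C
  /-- Finite tensors of positive shifts of duals of `C∞⁺` elements. -/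
  inductive CInfTS : (ξ : Address) → Behaviour ξ true → Prop where
    | shift {ξ} {i : ℕ} (C : Behaviour ξ true) (N : Behaviour (ξ ++ [i]) false)
        (P : Behaviour (ξ ++ [i]) true) :
        CInf (ξ ++ [i]) P → N.designs = orthSet (ξ ++ [i]) true P.designs →
        IsShiftOf ξ i C N → CInfTS ξ C
    | tensor {ξ} (A B C : Behaviour ξ true) :
        CInfTS ξ A → CInfTS ξ B → Alien ξ A B → IsTensorOf C A B →
        CInfTS ξ C
end

mutual
  /-- The class `C_f⁺`: as `C∞⁺` but with finite sums only. -/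
  inductive CFin : (ξ : Address) → Behaviour ξ true → Prop where
    | zero {ξ} (A : Behaviour ξ true) :
        A.designs = {DaiDesign} → CFin ξ A
    | one {ξ} (A : Behaviour ξ true) :
        A.designs = biorth ξ true {oneDesign ξ} → CFin ξ A
    | sum {ξ} {ι : Type} (F : ι → Behaviour ξ true) (C : Behaviour ξ true) :
        Nonempty ι → Finite ι → (∀ k, CFinTS ξ (F k)) → PairwiseDisjointFam F →
        IsSumOf C F → CFin ξ C
  inductive CFinTS : (ξ : Address) → Behaviour ξ true → Prop where
    | shift {ξ} {i : ℕ} (C : Behaviour ξ true) (N : Behaviour (ξ ++ [i]) false)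
        (P : Behaviour (ξ ++ [i]) true) :
        CFin (ξ ++ [i]) P → N.designs = orthSet (ξ ++ [i]) true P.designs →
        IsShiftOf ξ i C N → CFinTS ξ C
    | tensor {ξ} (A B C : Behaviour ξ true) :
        CFinTS ξ A → CFinTS ξ B → Alien ξ A B → IsTensorOf C A B →
        CFinTS ξ C
end

/-- The class `C∞⁻` : duals of `C∞⁺` elements. -/
def CInfN (ξ : Address) (B : Behaviour ξ false) : Prop :=
  ∃ A : Behaviour ξ true, CInf ξ A ∧ B.designs = orthSet ξ true A.designs

def CFinN (ξ : Address) (B : Behaviour ξ false) : Prop :=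
  ∃ A : Behaviour ξ true, CFin ξ A ∧ B.designs = orthSet ξ true A.designs

/-! ### Auxiliary material for `visitable_sum` -/

section VisitableSumAux

set_option maxHeartbeats 1000000

/-! #### Basic list/prefix lemmas -/

lemma head?_append_left' {l m : List Action} (h : l ≠ []) : (l ++ m).head? = l.head? := by
  cases l with
  | nil => exact absurd rfl h
  | cons a t => rfl

lemma head?_eq_of_prefix {w c : List Action} (h : w <+: c) (hw : w ≠ []) :
    c.head? = w.head? := by
  obtain ⟨r, rfl⟩ := h
  exact head?_append_left' hw

lemma head?_of_prefix_singleton {a : Action} {c : List Action} (h : [a] <+: c) :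
    c.head? = some a := by
  obtain ⟨r, rfl⟩ := h; rfl

lemma mem_of_head? {l : List Action} {a : Action} (h : l.head? = some a) : a ∈ l := by
  cases l with
  | nil => simp at h
  | cons b t =>
    simp at h
    simp [h]

lemma snoc_prefix_singleton {w : List Action} {a x : Action} (h : w ++ [a] <+: [x]) :
    w = [] ∧ a = x := by
  obtain ⟨r, hr⟩ := h
  cases w with
  | nil =>
    simp at hr
    exact ⟨rfl, hr.1⟩
  | cons b t =>
    exfalso
    have := congrArg List.length hr
    simp at this <;> omega

lemma snoc_prefix_pair {w : List Action} {a x y : Action} (h : w ++ [a] <+: [x, y]) :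
    (w = [] ∧ a = x) ∨ (w = [x] ∧ a = y) := by
  obtain ⟨r, hr⟩ := h
  match w, hr with
  | [], hr =>
    left
    simp at hr
    exact ⟨rfl, hr.1⟩
  | [b], hr =>
    right
    simp at hr
    exact ⟨by rw [hr.1], hr.2.1⟩
  | b :: c :: t, hr =>
    exfalso
    have := congrArg List.length hr
    simp at this <;> omega

lemma snoc2_prefix_pair {w : List Action} {a b x y : Action} (h : w ++ [a, b] <+: [x, y]) :
    w = [] ∧ a = x ∧ b = y := by
  obtain ⟨r, hr⟩ := h
  cases w with
  | nil =>
    simp at hr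
    exact ⟨rfl, hr.1, hr.2.1⟩
  | cons c t =>
    exfalso
    have := congrArg List.length hr
    simp at this <;> omega

lemma not_snoc2_prefix_singleton {w : List Action} {a b x : Action} :
    ¬ (w ++ [a, b] <+: [x]) := by
  rintro ⟨r, hr⟩
  have := congrArg List.length hr
  simp at this <;> omega

lemma pattern_not_prefix_singleton {w w₁ : List Action} {e σ x : Action} :
    ¬ (w ++ e :: w₁ ++ [σ] <+: [x]) := by
  rintro ⟨r, hr⟩
  have := congrArg List.length hr
  simp at this <;> omega

lemma pattern_prefix_pair {w w₁ : List Action} {e σ x y : Action}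
    (h : w ++ e :: w₁ ++ [σ] <+: [x, y]) : σ = y := by
  obtain ⟨r, hr⟩ := h
  match w, w₁, hr with
  | [], [], hr =>
    simp at hr
    exact hr.2.1
  | [], c :: t, hr =>
    exfalso
    have := congrArg List.length hr
    simp at this <;> omega
  | c :: t, w₁, hr =>
    exfalso
    have := congrArg List.length hr
    simp at this <;> omega

lemma prefix_singleton' {d : List Action} {x : Action} (h : d <+: [x]) (hne : d ≠ []) :
    d = [x] := by
  obtain ⟨r, hr⟩ := h
  match d, hr with
  | [], _ => exact absurd rfl hne
  | [a], hr =>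
    simp at hr
    rw [hr.1]
  | a :: b :: t, hr =>
    exfalso
    have := congrArg List.length hr
    simp at this <;> omega

lemma prefix_pair {d : List Action} {x y : Action} (h : d <+: [x, y]) (hne : d ≠ []) :
    d = [x] ∨ d = [x, y] := by
  obtain ⟨r, hr⟩ := h
  match d, hr with
  | [], _ => exact absurd rfl hne
  | [a], hr =>
    left
    simp at hr
    rw [hr.1]
  | [a, b], hr =>
    right
    simp at hr
    rw [hr.1, hr.2.1]
  | a :: b :: c :: t, hr =>
    exfalso
    have := congrArg List.length hr
    simp at this <;> omega

/-! #### View lemmas -/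

lemma viewRevAux_subset : ∀ (n : ℕ) (s : List Action) (a : Action), a ∈ viewRevAux n s → a ∈ s := by
  intro n
  induction n with
  | zero => intro s a h; simp [viewRevAux] at h
  | succ n ih =>
    intro s a h
    match s with
    | [] => simp [viewRevAux] at h
    | b :: t =>
      rw [viewRevAux] at h
      split at h
      · rcases List.mem_cons.1 h with rfl | h
        · exact List.mem_cons_self
        · exact List.mem_cons_of_mem _ (ih _ _ h)
      · rcases List.mem_cons.1 h with rfl | h
        · exact List.mem_cons_self
        · exact List.mem_cons_of_mem _ ((List.dropWhile_sublist _).subset (ih _ _ h))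

lemma mem_of_mem_view {s : List Action} {a : Action} (h : a ∈ view s) : a ∈ s := by
  unfold view viewRev at h
  have := viewRevAux_subset _ _ _ (List.mem_reverse.1 h)
  exact List.mem_reverse.1 this

lemma view_singleton (a : Action) : view [a] = [a] := by
  unfold view viewRev
  simp only [List.reverse_singleton, List.length_singleton]
  rw [viewRevAux]
  split <;> simp [viewRevAux]

lemma view_append_pos (w : List Action) {a : Action} (h : a.isPositive = true) :
    view (w ++ [a]) = view w ++ [a] := by
  unfold view viewRev
  rw [List.reverse_append]
  simp only [List.reverse_singleton, List.singleton_append, List.length_cons]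
  rw [viewRevAux]
  simp [h]

lemma view_pair_neg {a : Action} (h : a.isPositive = false) :
    view [a, Action.daimon] = [a, Action.daimon] := by
  have : ([a] : List Action) ++ [Action.daimon] = [a, Action.daimon] := rfl
  rw [← this, view_append_pos [a] (show Action.daimon.isPositive = true from rfl), view_singleton]

lemma view_ne_nil {s : List Action} (h : s ≠ []) : view s ≠ [] := by
  unfold view viewRev
  have h' : s.reverse ≠ [] := by simpa using h
  obtain ⟨b, t, hbt⟩ := List.exists_cons_of_ne_nil h'
  rw [hbt]
  simp only [List.length_cons]
  rw [viewRevAux]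
  split <;> simp

/-! #### Base and initial-action lemmas -/

lemma posBase_isPositive (ξ : Address) : (simpleBase ξ true).isPositive :=
  ⟨⟨none, {ξ}⟩, by simp [simpleBase], rfl⟩

lemma negBase_not_isPositive (ξ : Address) : ¬ (simpleBase ξ false).isPositive := by
  rintro ⟨σ, hσ, hleft⟩
  simp [simpleBase] at hσ
  rw [hσ] at hleft
  simp at hleft

lemma initial_posBase {ξ : Address} {a : Action} (h : Initial (simpleBase ξ true) a) :
    ∃ I, a = Action.proper true ξ I := by
  obtain ⟨pol, ζ, I, rfl, σ, hσ, hcond⟩ := h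
  simp [simpleBase] at hσ
  subst hσ
  rcases hcond with ⟨rfl, hζ⟩ | ⟨rfl, hl⟩
  · simp at hζ
    exact ⟨I, by rw [hζ]⟩
  · simp at hl

lemma initial_negBase {ξ : Address} {a : Action} (h : Initial (simpleBase ξ false) a) :
    ∃ I, a = Action.proper false ξ I := by
  obtain ⟨pol, ζ, I, rfl, σ, hσ, hcond⟩ := h
  simp [simpleBase] at hσ
  subst hσ
  rcases hcond with ⟨rfl, hζ⟩ | ⟨rfl, hl⟩
  · simp at hζ
  · simp at hl
    exact ⟨I, by rw [hl]⟩

/-! #### Chronicle head lemmas -/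

lemma chronicle_head_posBase {ξ : Address} {c : List Action}
    (hc : IsChronicle (simpleBase ξ true) c) :
    ∃ a t, c = a :: t ∧ (a = Action.daimon ∨ ∃ I, a = Action.proper true ξ I) := by
  obtain ⟨hp, hne, _⟩ := hc
  obtain ⟨a, t, rfl⟩ := List.exists_cons_of_ne_nil hne
  refine ⟨a, t, rfl, ?_⟩
  by_cases hd : a = Action.daimon
  · exact Or.inl hd
  · rcases hp.justified [] a ⟨t, rfl⟩ hd with hinit | ⟨b, hb, _⟩
    · exact Or.inr (initial_posBase hinit)
    · simp at hb

lemma chronicle_head_negBase {ξ : Address} {c : List Action}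
    (hc : IsChronicle (simpleBase ξ false) c) :
    ∃ I t, c = Action.proper false ξ I :: t := by
  obtain ⟨hp, hne, _⟩ := hc
  obtain ⟨a, t, rfl⟩ := List.exists_cons_of_ne_nil hne
  by_cases hd : a = Action.daimon
  · subst hd
    exact absurd (hp.daimonFirst rfl) (negBase_not_isPositive ξ)
  · rcases hp.justified [] a ⟨t, rfl⟩ hd with hinit | ⟨b, hb, _⟩
    · obtain ⟨I, rfl⟩ := initial_negBase hinit
      exact ⟨I, t, rfl⟩
    · simp at hb

lemma eq_daimon_singleton {β : Base} {c : List Action} (hp : IsPath β c) {t : List Action}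
    (hc : c = Action.daimon :: t) : c = [Action.daimon] := by
  have := hp.daimonLast [] (by rw [hc]; exact ⟨t, rfl⟩)
  simpa using this.symm

/-! #### Design head lemmas -/

lemma head_negBase {ξ : Address} {E : Set (List Action)}
    (hE : IsDesign (simpleBase ξ false) E) :
    ∀ c ∈ E, ∃ J, c.head? = some (Action.proper false ξ J) := by
  intro c hc
  obtain ⟨I, t, rfl⟩ := chronicle_head_negBase (hE.chron c hc)
  exact ⟨I, rfl⟩

lemma design_head_cases {ξ : Address} {D : Set (List Action)}
    (hD : IsDesign (simpleBase ξ true) D) :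
    ∃ a, [a] ∈ D ∧ (∀ c ∈ D, c.head? = some a) ∧
      (a = Action.daimon ∨ ∃ I, a = Action.proper true ξ I) := by
  obtain ⟨c₀, hc₀⟩ := hD.posNonempty (posBase_isPositive ξ)
  obtain ⟨a, t, rfl, hform⟩ := chronicle_head_posBase (hD.chron _ hc₀)
  have hsingle : [a] ∈ D := hD.prefixClosed _ hc₀ [a] ⟨t, rfl⟩ (by simp)
  refine ⟨a, hsingle, ?_, hform⟩
  intro c hc
  obtain ⟨b, u, rfl, hformb⟩ := chronicle_head_posBase (hD.chron _ hc)
  have hco := (hD.coherent _ hc _ hc₀).1 [] b a ⟨u, rfl⟩ ⟨t, rfl⟩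
  have hbpos : b.isPositive = true := by rcases hformb with rfl | ⟨I, rfl⟩ <;> rfl
  rcases hco with rfl | ⟨h1, _⟩
  · rfl
  · rw [hbpos] at h1
    exact absurd h1 (by simp)

lemma focus_not_in_tail {x : Action} {t : List Action} {ζ : Address}
    (hnd : ((x :: t).filterMap Action.focus?).Nodup) (hx : x.focus? = some ζ)
    {a : Action} (ha : a ∈ t) (haf : a.focus? = some ζ) : False := by
  simp only [List.filterMap_cons, hx] at hnd
  exact (List.nodup_cons.1 hnd).1 (List.mem_filterMap.2 ⟨a, ha, haf⟩)

/-! #### Action dual lemmas -/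

lemma eq_proper_of_dual {a : Action} {ζ : Address} {J : Finset ℕ}
    (h : a.dual = Action.proper false ζ J) : a = Action.proper true ζ J := by
  cases a with
  | daimon => simp [Action.dual] at h
  | proper pos ζ' K =>
    simp [Action.dual] at h
    obtain ⟨h1, h2, h3⟩ := h
    cases pos with
    | false => simp at h1
    | true => rw [h2, h3]

lemma mem_dualSeq {p : List Action} {a : Action} (h : a ∈ dualSeq p) :
    a = Action.daimon ∨ ∃ b ∈ p, a = b.dual := by
  unfold dualSeq at h
  split at h
  · obtain ⟨b, hb, rfl⟩ := List.mem_map.1 h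
    exact Or.inr ⟨b, (List.dropLast_sublist _).subset hb, rfl⟩
  · rcases List.mem_append.1 h with h' | h'
    · obtain ⟨b, hb, rfl⟩ := List.mem_map.1 h'
      exact Or.inr ⟨b, hb, rfl⟩
    · simp at h'
      exact Or.inl h'

/-! #### Orthogonal-set membership -/

lemma mem_orthSet_true {ξ : Address} {A : Set (Set (List Action))} {E : Set (List Action)} :
    E ∈ orthSet ξ true A ↔
      IsDesign (simpleBase ξ false) E ∧ ∀ D ∈ A, Conv D E True [] := Iff.rfl

lemma mem_biorth_true {ξ : Address} {A : Set (Set (List Action))} {G : Set (List Action)} :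
    G ∈ biorth ξ true A ↔
      IsDesign (simpleBase ξ true) G ∧ ∀ E ∈ orthSet ξ true A, Conv G E True [] := Iff.rfl

lemma subset_biorth {ξ : Address} {A : Set (Set (List Action))}
    (hA : ∀ D ∈ A, IsDesign (simpleBase ξ true) D) : A ⊆ biorth ξ true A := by
  intro D hD
  rw [mem_biorth_true]
  exact ⟨hA D hD, fun E hE => (mem_orthSet_true.1 hE).2 D hD⟩

lemma orthSet_anti {ξ : Address} {A A' : Set (Set (List Action))} (h : A ⊆ A') :
    orthSet ξ true A' ⊆ orthSet ξ true A := by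
  intro E hE
  rw [mem_orthSet_true] at hE ⊢
  exact ⟨hE.1, fun D hD => hE.2 D (h hD)⟩

lemma orth_biorth_subset {ξ : Address} {A : Set (Set (List Action))}
    (hA : ∀ D ∈ A, IsDesign (simpleBase ξ true) D) :
    orthSet ξ true (biorth ξ true A) ⊆ orthSet ξ true A := orthSet_anti (subset_biorth hA)

lemma mem_orth_biorth {ξ : Address} {A : Set (Set (List Action))} {E : Set (List Action)}
    (hE : E ∈ orthSet ξ true A) : E ∈ orthSet ξ true (biorth ξ true A) := by
  rw [mem_orthSet_true] at hE ⊢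
  exact ⟨hE.1, fun D hD => (mem_biorth_true.1 hD).2 E (mem_orthSet_true.2 hE)⟩

/-! #### TurnD lemmas -/

lemma turnD_nil (dpos : Prop) (h : dpos) : TurnD dpos [] := h

lemma not_turnD_snoc_pos {dpos : Prop} {s : List Action} {a : Action}
    (h : a.isPositive = true) : ¬ TurnD dpos (s ++ [a]) := by
  unfold TurnD
  rw [List.getLast?_concat]
  simp [h]

/-! #### Convergence monotonicity -/

lemma conv_mono {D R R' : Set (List Action)} {dpos : Prop} (hsub : R ⊆ R') :
    ∀ {s}, Conv D R dpos s → Conv D R' dpos s := by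
  intro s h
  induction h with
  | daiD h1 h2 => exact Conv.daiD h1 h2
  | daiR h1 h2 => exact Conv.daiR h1 (hsub h2)
  | stepD h1 h2 h3 h4 h5 h6 ih => exact Conv.stepD h1 h2 h3 h4 (hsub h5) ih
  | stepR h1 h2 h3 h4 h5 ih => exact Conv.stepR h1 h2 (hsub h3) h4 ih

/-! #### The modified counter-design `mixD` -/

/-- Replace the behaviour of `E` on first ramifications in `B` by immediate daimon. -/
def mixD (ξ : Address) (B : Set (Finset ℕ)) (E : Set (List Action)) : Set (List Action) :=
  {c | (c ∈ E ∧ ∀ J ∈ B, c.head? ≠ some (Action.proper false ξ J)) ∨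
       (∃ J ∈ B, c = [Action.proper false ξ J] ∨
          c = [Action.proper false ξ J, Action.daimon])}

lemma isPath_neg_single (ξ : Address) (J : Finset ℕ) :
    IsPath (simpleBase ξ false) [Action.proper false ξ J] := by
  constructor
  · simp [List.Chain']
  · intro w a hpre _
    obtain ⟨rfl, rfl⟩ := snoc_prefix_singleton hpre
    exact Or.inl ⟨false, ξ, J, rfl, ⟨some ξ, ∅⟩, by simp [simpleBase], Or.inr ⟨rfl, rfl⟩⟩
  · intro w a b hpre hpos hb
    obtain ⟨rfl, rfl⟩ := snoc_prefix_singleton hpre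
    simp at hb
  · intro w a hpre hpos hnd
    obtain ⟨rfl, rfl⟩ := snoc_prefix_singleton hpre
    simp [Action.isPositive] at hpos
  · simp [Action.focus?]
  · intro w hpre
    obtain ⟨rfl, hda⟩ := snoc_prefix_singleton hpre
    simp at hda
  · intro hh
    simp at hh
  · intro hpos
    exact absurd hpos (negBase_not_isPositive ξ)

lemma isPath_neg_dai (ξ : Address) (J : Finset ℕ) :
    IsPath (simpleBase ξ false) [Action.proper false ξ J, Action.daimon] := by
  constructor
  · simp [Action.isPositive, List.Chain']
  · intro w a hpre hda
    rcases snoc_prefix_pair hpre with ⟨rfl, rfl⟩ | ⟨rfl, rfl⟩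
    · exact Or.inl ⟨false, ξ, J, rfl, ⟨some ξ, ∅⟩, by simp [simpleBase], Or.inr ⟨rfl, rfl⟩⟩
    · exact absurd rfl hda
  · intro w a b hpre hpos hb hj
    rcases snoc_prefix_pair hpre with ⟨rfl, rfl⟩ | ⟨rfl, rfl⟩
    · simp at hb
    · simp at hb
      subst hb
      rw [view_singleton]
      simp
  · intro w a hpre hpos hda
    rcases snoc_prefix_pair hpre with ⟨rfl, rfl⟩ | ⟨rfl, rfl⟩
    · simp [Action.isPositive] at hpos
    · exact absurd rfl hda
  · simp [Action.focus?]; exact List.nodup_nil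
  · intro w hpre
    rcases snoc_prefix_pair hpre with ⟨rfl, hda⟩ | ⟨rfl, -⟩
    · simp at hda
    · rfl
  · intro hh
    simp at hh
  · intro hpos
    exact absurd hpos (negBase_not_isPositive ξ)

lemma isChronicle_neg_single (ξ : Address) (J : Finset ℕ) :
    IsChronicle (simpleBase ξ false) [Action.proper false ξ J] :=
  ⟨isPath_neg_single ξ J, by simp, by
    intro w a b hpre _
    exact absurd hpre not_snoc2_prefix_singleton⟩

lemma isChronicle_neg_dai (ξ : Address) (J : Finset ℕ) :
    IsChronicle (simpleBase ξ false) [Action.proper false ξ J, Action.daimon] :=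
  ⟨isPath_neg_dai ξ J, by simp, by
    intro w a b hpre hneg
    obtain ⟨rfl, rfl, rfl⟩ := snoc2_prefix_pair hpre
    simp [Action.isPositive] at hneg⟩

lemma isDesign_empty (ξ : Address) :
    IsDesign (simpleBase ξ false) (∅ : Set (List Action)) :=
  ⟨fun c hc => absurd hc (Set.notMem_empty c),
   fun c hc => absurd hc (Set.notMem_empty c),
   fun c hc => absurd hc (Set.notMem_empty c),
   fun c hc => absurd hc (Set.notMem_empty c),
   fun hpos => absurd hpos (negBase_not_isPositive ξ)⟩
lemma mixD_head {ξ : Address} {B : Set (Finset ℕ)} {E : Set (List Action)}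
    (hE : IsDesign (simpleBase ξ false) E) :
    ∀ c ∈ mixD ξ B E, ∃ K, c.head? = some (Action.proper false ξ K) := by
  rintro c (⟨hcE, -⟩ | ⟨J, -, rfl | rfl⟩)
  · exact head_negBase hE c hcE
  · exact ⟨J, rfl⟩
  · exact ⟨J, rfl⟩

lemma isDesign_mixD {ξ : Address} {B : Set (Finset ℕ)} {E : Set (List Action)}
    (hE : IsDesign (simpleBase ξ false) E) :
    IsDesign (simpleBase ξ false) (mixD ξ B E) := by
  constructor
  · rintro c (⟨hcE, -⟩ | ⟨J, -, rfl | rfl⟩)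
    · exact hE.chron _ hcE
    · exact isChronicle_neg_single ξ J
    · exact isChronicle_neg_dai ξ J
  · rintro c (⟨hcE, hfil⟩ | ⟨J, hJ, rfl | rfl⟩) d hd hdne
    · left
      refine ⟨hE.prefixClosed _ hcE d hd hdne, ?_⟩
      intro K hK hcontra
      exact hfil K hK ((head?_eq_of_prefix hd hdne).symm ▸ hcontra)
    · right
      exact ⟨J, hJ, Or.inl (prefix_singleton' hd hdne)⟩
    · right
      rcases prefix_pair hd hdne with h | h
      · exact ⟨J, hJ, Or.inl h⟩
      · exact ⟨J, hJ, Or.inr h⟩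
  · rintro c hc d hd
    have hch := mixD_head hE c hc
    have hdh := mixD_head hE d hd
    constructor
    · intro w κ₁ κ₂ h1 h2
      cases w with
      | nil =>
        right
        obtain ⟨K₁, hK₁⟩ := hch
        obtain ⟨K₂, hK₂⟩ := hdh
        have e₁ : κ₁ = Action.proper false ξ K₁ :=
          Option.some.inj ((head?_of_prefix_singleton (by simpa using h1)).symm.trans hK₁)
        have e₂ : κ₂ = Action.proper false ξ K₂ :=
          Option.some.inj ((head?_of_prefix_singleton (by simpa using h2)).symm.trans hK₂)
        exact ⟨by rw [e₁]; rfl, by rw [e₂]; rfl⟩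
      | cons e w' =>
        have hce : c.head? = some e :=
          (head?_eq_of_prefix h1 (by simp)).trans rfl
        have hde : d.head? = some e :=
          (head?_eq_of_prefix h2 (by simp)).trans rfl
        rcases hc with ⟨hcE, hcfil⟩ | ⟨J₁, hJ₁, hcnew⟩
        · rcases hd with ⟨hdE, hdfil⟩ | ⟨J₂, hJ₂, hdnew⟩
          · exact (hE.coherent c hcE d hdE).1 (e :: w') κ₁ κ₂ h1 h2
          · exfalso
            have hdh2 : d.head? = some (Action.proper false ξ J₂) := by
              rcases hdnew with rfl | rfl <;> rfl
            exact hcfil J₂ hJ₂ (hce.trans (hde.symm.trans hdh2))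
        · rcases hd with ⟨hdE, hdfil⟩ | ⟨J₂, hJ₂, hdnew⟩
          · exfalso
            have hch2 : c.head? = some (Action.proper false ξ J₁) := by
              rcases hcnew with rfl | rfl <;> rfl
            exact hdfil J₁ hJ₁ (hde.trans (hce.symm.trans hch2))
          · rcases hcnew with rfl | rfl
            · exact absurd (snoc_prefix_singleton h1).1 (by simp)
            · rcases snoc_prefix_pair h1 with ⟨h, -⟩ | ⟨hw, rfl⟩
              · exact absurd h (by simp)
              · rcases hdnew with rfl | rfl
                · exact absurd (snoc_prefix_singleton h2).1 (by simp)
                · rcases snoc_prefix_pair h2 with ⟨h, -⟩ | ⟨hw', rfl⟩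
                  · exact absurd h (by simp)
                  · exact Or.inl rfl
    · intro w ζ₁ I₁ w₁ σ₁ ζ₂ I₂ w₂ σ₂ h1 h2 hne f hf
      rcases hd with ⟨hdE, -⟩ | ⟨J₂, -, hdnew⟩
      · rcases hc with ⟨hcE, -⟩ | ⟨J₁, -, hcnew⟩
        · exact (hE.coherent c hcE d hdE).2 w ζ₁ I₁ w₁ σ₁ ζ₂ I₂ w₂ σ₂ h1 h2 hne f hf
        · exfalso
          have hσ₁ : σ₁ = Action.daimon := by
            rcases hcnew with rfl | rfl
            · exact absurd h1 pattern_not_prefix_singleton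
            · exact pattern_prefix_pair h1
          rw [hσ₁] at hf
          simp [Action.focus?] at hf
      · have hσ₂ : σ₂ = Action.daimon := by
          rcases hdnew with rfl | rfl
          · exact absurd h2 pattern_not_prefix_singleton
          · exact pattern_prefix_pair h2
        rw [hσ₂]
        simp [Action.focus?]
  · rintro c (⟨hcE, hfil⟩ | ⟨J, hJ, rfl | rfl⟩) hext
    · refine hE.maxPos _ hcE ?_
      intro κ hκ
      refine hext κ (Or.inl ⟨hκ, ?_⟩)
      intro K hK hcontra
      have hcne : c ≠ [] := (hE.chron _ hcE).2.1
      exact hfil K hK (by rwa [head?_append_left' hcne] at hcontra)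
    · exact absurd
        (show ([Action.proper false ξ J] ++ [Action.daimon]) ∈ mixD ξ B E from
          Or.inr ⟨J, hJ, Or.inr rfl⟩)
        (hext Action.daimon)
    · exact ⟨Action.daimon, by simp, rfl⟩
  · intro hpos
    exact absurd hpos (negBase_not_isPositive ξ)
/-! #### Convergence lemmas -/

lemma conv_daimon_first {D R : Set (List Action)} {dpos : Prop} (hd : dpos)
    (h : [Action.daimon] ∈ D) : Conv D R dpos [] :=
  Conv.daiD (turnD_nil _ hd) (by rw [List.nil_append, view_singleton]; exact h)

lemma conv_mixD_first {ξ : Address} {B : Set (Finset ℕ)} {E D : Set (List Action)}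
    {J : Finset ℕ} (hJ : J ∈ B) (hfirst : [Action.proper true ξ J] ∈ D) :
    Conv D (mixD ξ B E) True [] := by
  refine Conv.stepD (κ := Action.proper true ξ J) (turnD_nil _ trivial) rfl (by simp) ?_ ?_ ?_
  · rw [List.nil_append, view_singleton]
    exact hfirst
  · have hmap : ([] ++ [Action.proper true ξ J]).map Action.dual
        = [Action.proper false ξ J] := rfl
    rw [hmap, view_singleton]
    exact Or.inr ⟨J, hJ, Or.inl rfl⟩
  · refine Conv.daiR (not_turnD_snoc_pos (s := []) rfl) ?_
    have hmap : ([] ++ [Action.proper true ξ J]).map Action.dual ++ [Action.daimon]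
        = [Action.proper false ξ J, Action.daimon] := rfl
    rw [hmap, view_pair_neg (show (Action.proper false ξ J).isPositive = false from rfl)]
    exact Or.inr ⟨J, hJ, Or.inr rfl⟩

lemma restrict_head {ξ : Address} {I : Finset ℕ} {u v : List Action} {J : Finset ℕ}
    (hv : v.head? = some (Action.proper false ξ J))
    (hmem : ∀ a ∈ v, a ∈ u.map Action.dual ++ [Action.daimon])
    (hinv : ∀ K, Action.proper true ξ K ∈ u → K = I) : J = I := by
  have h1 : Action.proper false ξ J ∈ u.map Action.dual ++ [Action.daimon] :=
    hmem _ (mem_of_head? hv)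
  rcases List.mem_append.1 h1 with h | h
  · obtain ⟨b, hb, hbd⟩ := List.mem_map.1 h
    exact hinv J ((eq_proper_of_dual hbd) ▸ hb)
  · simp at h

lemma conv_restrict {ξ : Address} {I : Finset ℕ} {D R : Set (List Action)} {dpos : Prop}
    (hDchr : ∀ c ∈ D, (c.filterMap Action.focus?).Nodup)
    (hDhead : ∀ c ∈ D, c.head? = some (Action.proper true ξ I))
    (hRhead : ∀ c ∈ R, ∃ J, c.head? = some (Action.proper false ξ J)) :
    ∀ s, Conv D R dpos s → (s = [] ∨ view s ∈ D) →
      (∀ K, Action.proper true ξ K ∈ s → K = I) →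
      Conv D {c | c ∈ R ∧ c.head? = some (Action.proper false ξ I)} dpos s := by
  intro s hconv
  induction hconv with
  | @daiD s h1 h2 => exact fun _ _ => Conv.daiD h1 h2
  | @daiR s h1 h2 =>
    intro hvD hinv
    obtain ⟨J, hJ⟩ := hRhead _ h2
    have hJI : J = I := restrict_head hJ (fun a ha => mem_of_mem_view ha) hinv
    subst hJI
    exact Conv.daiR h1 ⟨h2, hJ⟩
  | @stepD s κ h1 h2 h3 h4 h5 h6 ih =>
    intro hvD hinv
    have hinv' : ∀ K, Action.proper true ξ K ∈ s ++ [κ] → K = I := by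
      intro K hK
      rcases List.mem_append.1 hK with hK | hK
      · exact hinv K hK
      · have hκ : Action.proper true ξ K = κ := by simpa using hK
        subst hκ
        rcases hvD with rfl | hvD
        · have h4' : [Action.proper true ξ K] ∈ D := by
            rw [List.nil_append, view_singleton] at h4
            exact h4
          have := hDhead _ h4'
          simp at this
          exact this
        · exfalso
          have hhead := hDhead _ hvD
          obtain ⟨v₀, vt, hvs⟩ : ∃ v₀ vt, view s = v₀ :: vt := by
            cases hv : view s with
            | nil => rw [hv] at hhead; simp at hhead
            | cons a t => exact ⟨a, t, rfl⟩
          have hv₀ : v₀ = Action.proper true ξ I := by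
            rw [hvs] at hhead; simpa using hhead
          have hc : view s ++ [Action.proper true ξ K] ∈ D := by
            rw [← view_append_pos s (show (Action.proper true ξ K).isPositive = true from rfl)]
            exact h4
          have hnd := hDchr _ hc
          rw [hvs, List.cons_append] at hnd
          exact focus_not_in_tail hnd (show v₀.focus? = some ξ by rw [hv₀]; rfl)
            (List.mem_append.2 (Or.inr (by simp)))
            (show (Action.proper true ξ K).focus? = some ξ from rfl)
    have h5' : view ((s ++ [κ]).map Action.dual) ∈
        {c | c ∈ R ∧ c.head? = some (Action.proper false ξ I)} := by
      obtain ⟨J, hJ⟩ := hRhead _ h5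
      have hJI : J = I := restrict_head hJ
        (fun a ha => List.mem_append.2 (Or.inl (mem_of_mem_view ha))) hinv'
      subst hJI
      exact ⟨h5, hJ⟩
    exact Conv.stepD h1 h2 h3 h4 h5' (ih (Or.inr h4) hinv')
  | @stepR s κ h1 h2 h3 h4 h5 ih =>
    intro hvD hinv
    have hinv' : ∀ K, Action.proper true ξ K ∈ s ++ [κ] → K = I := by
      intro K hK
      rcases List.mem_append.1 hK with hK | hK
      · exact hinv K hK
      · exfalso
        have hκ : Action.proper true ξ K = κ := by simpa using hK
        rw [← hκ] at h2
        simp [Action.isPositive] at h2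
    have h3' : view ((s ++ [κ]).map Action.dual) ∈
        {c | c ∈ R ∧ c.head? = some (Action.proper false ξ I)} := by
      obtain ⟨J, hJ⟩ := hRhead _ h3
      have hJI : J = I := restrict_head hJ
        (fun a ha => List.mem_append.2 (Or.inl (mem_of_mem_view ha))) hinv'
      subst hJI
      exact ⟨h3, hJ⟩
    exact Conv.stepR h1 h2 h3' h4 (ih (Or.inr h4) hinv')

lemma first_ram_mem {ξ : Address} {I : Finset ℕ} {D : Set (List Action)}
    {B : Set (Finset ℕ)}
    (hDhead : ∀ c ∈ D, c.head? = some (Action.proper true ξ I))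
    (h : Conv D (mixD ξ B ∅) True []) : I ∈ B := by
  cases h with
  | daiD h1 h2 =>
    rw [List.nil_append, view_singleton] at h2
    have := hDhead _ h2
    simp at this
  | daiR h1 h2 => exact absurd (turnD_nil _ trivial) h1
  | @stepD _ κ h1 h2 h3 h4 h5 h6 =>
    rw [List.nil_append, view_singleton] at h4
    have hκ := hDhead _ h4
    simp at hκ
    subst hκ
    have hmap : ([] ++ [Action.proper true ξ I]).map Action.dual
        = [Action.proper false ξ I] := rfl
    rw [hmap, view_singleton] at h5
    rcases h5 with ⟨h5, -⟩ | ⟨J, hJ, hform | hform⟩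
    · exact absurd h5 (Set.notMem_empty _)
    · simp at hform
      rwa [hform]
    · simp at hform
  | stepR h1 => exact absurd (turnD_nil _ trivial) h1

lemma conv_mixD_back {ξ : Address} {I : Finset ℕ} {B : Set (Finset ℕ)}
    {D E : Set (List Action)}
    (hDchr : ∀ c ∈ D, (c.filterMap Action.focus?).Nodup)
    (hDhead : ∀ c ∈ D, c.head? = some (Action.proper true ξ I))
    (hEd : IsDesign (simpleBase ξ false) E)
    (hIB : I ∉ B)
    (h : Conv D (mixD ξ B E) True []) : Conv D E True [] := by
  have hres := conv_restrict (I := I) hDchr hDhead (mixD_head hEd) [] h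
    (Or.inl rfl) (by intro K hK; simp at hK)
  refine conv_mono ?_ hres
  rintro c ⟨hc, hch⟩
  rcases hc with ⟨hcE, -⟩ | ⟨J, hJ, rfl | rfl⟩
  · exact hcE
  · exfalso
    simp at hch
    exact hIB (hch ▸ hJ)
  · exfalso
    simp at hch
    exact hIB (hch ▸ hJ)
/-! #### The daimon design -/

lemma isDesign_daiDesign (ξ : Address) (hp : IsPath (simpleBase ξ true) [Action.daimon]) :
    IsDesign (simpleBase ξ true) DaiDesign := by
  have hchr : IsChronicle (simpleBase ξ true) [Action.daimon] :=
    ⟨hp, by simp, by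
      intro w a b hpre _
      exact absurd hpre not_snoc2_prefix_singleton⟩
  constructor
  · rintro c rfl
    exact hchr
  · rintro c rfl d hd hdne
    exact prefix_singleton' hd hdne
  · rintro c rfl d rfl
    constructor
    · intro w κ₁ κ₂ h1 h2
      obtain ⟨rfl, rfl⟩ := snoc_prefix_singleton h1
      obtain ⟨-, rfl⟩ := snoc_prefix_singleton h2
      exact Or.inl rfl
    · intro w ζ₁ I₁ w₁ σ₁ ζ₂ I₂ w₂ σ₂ h1 h2 hne f hf
      exact absurd h1 pattern_not_prefix_singleton
  · rintro c rfl _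
    exact ⟨Action.daimon, by simp, rfl⟩
  · intro _
    exact ⟨[Action.daimon], rfl⟩

lemma daiDesign_mem_biorth (ξ : Address) (hp : IsPath (simpleBase ξ true) [Action.daimon])
    (A : Set (Set (List Action))) : DaiDesign ∈ biorth ξ true A := by
  rw [mem_biorth_true]
  exact ⟨isDesign_daiDesign ξ hp, fun E _ => conv_daimon_first trivial rfl⟩

/-! #### `mixD` is orthogonal to the whole union -/

lemma mixD_mem_orth {ξ : Address} {ι : Type} {F : ι → Behaviour ξ true} (k : ι)
    (hdisj : PairwiseDisjointFam F) {E : Set (List Action)}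
    (hEd : IsDesign (simpleBase ξ false) E)
    (hEk : ∀ D ∈ (F k).designs, Conv D E True []) :
    mixD ξ {J | ∃ l, l ≠ k ∧ J ∈ directory ξ (F l).designs} E ∈
      orthSet ξ true (⋃ l, (F l).designs) := by
  rw [mem_orthSet_true]
  refine ⟨isDesign_mixD hEd, ?_⟩
  intro D hD
  rw [Set.mem_iUnion] at hD
  obtain ⟨l, hDl⟩ := hD
  have hDdes := (F l).isDesign D hDl
  obtain ⟨a, ha, hall, hform⟩ := design_head_cases hDdes
  rcases hform with rfl | ⟨J, rfl⟩
  · exact conv_daimon_first trivial ha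
  · have hJdir : J ∈ directory ξ (F l).designs := ⟨D, hDl, [Action.proper true ξ J], ha, rfl⟩
    by_cases hlk : l = k
    · subst hlk
      have hJnb : J ∉ {J | ∃ l', l' ≠ l ∧ J ∈ directory ξ (F l').designs} := by
        rintro ⟨l', hl', hJl'⟩
        exact hdisj l l' (Ne.symm hl') J hJdir hJl'
      have hres := conv_restrict (I := J)
        (fun c hc => ((hDdes.chron c hc).1).linearity) hall (head_negBase hEd)
        [] (hEk D hDl) (Or.inl rfl) (by intro K hK; simp at hK)
      refine conv_mono ?_ hres
      rintro c ⟨hcE, hch⟩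
      left
      refine ⟨hcE, ?_⟩
      intro J' hJ' hc
      rw [hch] at hc
      simp at hc
      exact hJnb (hc ▸ hJ')
    · exact conv_mixD_first ⟨l, hlk, hJdir⟩ ha
end VisitableSumAux

/-- visitable paths of a sum of a nonempty family of pairwise
disjoint positive behaviours: `V_{⊕ₖ Aₖ} = ⨄ₖ V_{Aₖ}`. -/
theorem visitable_sum (ξ : Address) {ι : Type} [Nonempty ι]
    (F : ι → Behaviour ξ true) (C : Behaviour ξ true)
    (hdisj : PairwiseDisjointFam F) (h : IsSumOf C F) :
    {p | Visitable C p} = ⋃ k, {p | Visitable (F k) p} := by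
  have h' : C.designs = biorth ξ true (⋃ l, (F l).designs) := h
  have hSdes : ∀ D ∈ ⋃ l, (F l).designs, IsDesign (simpleBase ξ true) D := by
    intro D hD
    rw [Set.mem_iUnion] at hD
    obtain ⟨l, hDl⟩ := hD
    exact (F l).isDesign D hDl
  ext p
  simp only [Set.mem_setOf_eq, Set.mem_iUnion]
  constructor
  · rintro ⟨D, hD, E, hE, hpD, hpE⟩
    rw [h'] at hD hE
    have hES : E ∈ orthSet ξ true (⋃ l, (F l).designs) := orth_biorth_subset hSdes hE
    have hDdes : IsDesign (simpleBase ξ true) D := (mem_biorth_true.1 hD).1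
    obtain ⟨a, t, rfl, hht⟩ := hpD.1.totality (posBase_isPositive ξ)
    rcases hht with rfl | ⟨hpos, hinit⟩
    · -- p = [daimon]
      have hpd : Action.daimon :: t = [Action.daimon] := eq_daimon_singleton hpD.1 rfl
      have ht : t = [] := by injection hpd
      subst ht
      obtain ⟨k⟩ := ‹Nonempty ι›
      refine ⟨k, DaiDesign, ?_, E, ?_, ⟨hpD.1, ?_⟩, hpE⟩
      · rw [(F k).closed]
        exact daiDesign_mem_biorth ξ hpD.1 _
      · exact orthSet_anti (Set.subset_iUnion (fun l => (F l).designs) k) hES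
      · intro q hq hqne
        rw [prefix_singleton' hq hqne, view_singleton]
        rfl
    · -- p = (+,ξ,I) :: t
      obtain ⟨I, rfl⟩ := initial_posBase hinit
      have haD : [Action.proper true ξ I] ∈ D := by
        have := hpD.2 [Action.proper true ξ I] ⟨t, rfl⟩ (by simp)
        rwa [view_singleton] at this
      obtain ⟨a₀, ha₀, hall, hform⟩ := design_head_cases hDdes
      have ha₀' : a₀ = Action.proper true ξ I := by
        have := hall _ haD
        simp at this
        exact this.symm
      subst ha₀'
      -- the first ramification is in some directory
      have hE₀ : mixD ξ {J | ∃ l, J ∈ directory ξ (F l).designs} ∅ ∈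
          orthSet ξ true (⋃ l, (F l).designs) := by
        rw [mem_orthSet_true]
        refine ⟨isDesign_mixD (isDesign_empty ξ), ?_⟩
        intro D' hD'
        rw [Set.mem_iUnion] at hD'
        obtain ⟨l, hD'l⟩ := hD'
        obtain ⟨b, hb, -, hbform⟩ := design_head_cases ((F l).isDesign _ hD'l)
        rcases hbform with rfl | ⟨J, rfl⟩
        · exact conv_daimon_first trivial hb
        · exact conv_mixD_first ⟨l, D', hD'l, [Action.proper true ξ J], hb, rfl⟩ hb
      have hIDir : I ∈ {J | ∃ l, J ∈ directory ξ (F l).designs} :=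
        first_ram_mem hall ((mem_biorth_true.1 hD).2 _ hE₀)
      obtain ⟨k, hIk⟩ := hIDir
      have hInotbad : I ∉ {J | ∃ l, l ≠ k ∧ J ∈ directory ξ (F l).designs} := by
        rintro ⟨l, hlk, hIl⟩
        exact hdisj k l (Ne.symm hlk) I hIk hIl
      have hDk : D ∈ (F k).designs := by
        rw [(F k).closed, mem_biorth_true]
        refine ⟨hDdes, ?_⟩
        intro E' hE'
        have hE'd := (mem_orthSet_true.1 hE').1
        have hE'k := (mem_orthSet_true.1 hE').2
        have hconv := (mem_biorth_true.1 hD).2 _ (mixD_mem_orth k hdisj hE'd hE'k)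
        exact conv_mixD_back (fun c hc => (hDdes.chron c hc).1.linearity)
          hall hE'd hInotbad hconv
      exact ⟨k, D, hDk, E,
        orthSet_anti (Set.subset_iUnion (fun l => (F l).designs) k) hES, hpD, hpE⟩
  · rintro ⟨k, D, hDk, E, hEk, hpD, hpE⟩
    have hEkd := (mem_orthSet_true.1 hEk).1
    have hEkc := (mem_orthSet_true.1 hEk).2
    have hDC : D ∈ C.designs := by
      rw [h', mem_biorth_true]
      refine ⟨(F k).isDesign D hDk, ?_⟩
      intro E' hE'
      have hE'k : E' ∈ orthSet ξ true (F k).designs :=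
        orthSet_anti (Set.subset_iUnion (fun l => (F l).designs) k) hE'
      have hDb : D ∈ biorth ξ true (F k).designs := (F k).closed ▸ hDk
      exact (mem_biorth_true.1 hDb).2 E' hE'k
    have hmix := mixD_mem_orth k hdisj hEkd hEkc
    have hmixC : mixD ξ {J | ∃ l, l ≠ k ∧ J ∈ directory ξ (F l).designs} E ∈
        orthSet ξ true C.designs := by
      rw [h']
      exact mem_orth_biorth hmix
    refine ⟨D, hDC, mixD ξ {J | ∃ l, l ≠ k ∧ J ∈ directory ξ (F l).designs} E, hmixC,
      hpD, ?_⟩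
    obtain ⟨a, t, rfl, hht⟩ := hpD.1.totality (posBase_isPositive ξ)
    rcases hht with rfl | ⟨hpos, hinit⟩
    · -- p = [daimon]
      have hpd : Action.daimon :: t = [Action.daimon] := eq_daimon_singleton hpD.1 rfl
      have ht : t = [] := by injection hpd
      subst ht
      have hnil : dualSeq [Action.daimon] = [] := by simp [dualSeq]
      refine ⟨by rw [hnil]; rw [hnil] at hpE; exact hpE.1, ?_⟩
      intro q hq hqne
      rw [hnil] at hq
      exact absurd (List.prefix_nil.1 hq) hqne
    · obtain ⟨I, rfl⟩ := initial_posBase hinit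
      have haD : [Action.proper true ξ I] ∈ D := by
        have := hpD.2 [Action.proper true ξ I] ⟨t, rfl⟩ (by simp)
        rwa [view_singleton] at this
      have hIk : I ∈ directory ξ (F k).designs := ⟨D, hDk, [Action.proper true ξ I], haD, rfl⟩
      have hInotbad : I ∉ {J | ∃ l, l ≠ k ∧ J ∈ directory ξ (F l).designs} := by
        rintro ⟨l, hlk, hIl⟩
        exact hdisj k l (Ne.symm hlk) I hIk hIl
      refine ⟨hpE.1, ?_⟩
      intro q hq hqne
      have hv := hpE.2 q hq hqne
      left
      refine ⟨hv, ?_⟩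
      intro J hJ hcontra
      have hJI : J = I := by
        have hmemq : Action.proper false ξ J ∈ q := mem_of_mem_view (mem_of_head? hcontra)
        have hmemd : Action.proper false ξ J ∈ dualSeq (Action.proper true ξ I :: t) :=
          hq.subset hmemq
        rcases mem_dualSeq hmemd with hda | ⟨b, hb, hbd⟩
        · simp at hda
        · have hb' : b = Action.proper true ξ J := eq_proper_of_dual hbd.symm
          subst hb'
          rcases List.mem_cons.1 hb with hbb | hbb
          · simp at hbb
            exact hbb
          · exfalso
            exact focus_not_in_tail hpD.1.linearity
              (show (Action.proper true ξ I).focus? = some ξ from rfl) hbb rfl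
      subst hJI
      exact hInotbad hJ
end Ludics
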